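/- (Key inconsistency step in necessary condition) Let T ∈ ∂G(x̄) and L ∈ ∂S(x̄) be strong subdifferential elements, where G is arbitrary and S is arbitrary, and suppose x̄ ∈ Ω = {x ∈ C : H(x) − S(x) ∈ −D} is an ε-weak local minimal solution of (P) on a neighborhood U. Then the system F(x) − F(x̄) − T(x − x̄) + ε ∈ −int K and H(x) − H(x̄) − L(x − x̄) ∈ −int D has no solution x ∈ U ∩ C. -/

import Mathlib

open Pointwise

lemma cone_add_mem {Y : Type*} [AddCommGroup Y] [Module ℝ Y]
    (K : Set Y) (hconv : Convex ℝ K)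
    (hcone : ∀ t : ℝ, 0 < t → ∀ y ∈ K, t • y ∈ K)
    {a b : Y} (ha : a ∈ K) (hb : b ∈ K) : a + b ∈ K := by
  have h := hconv ha hb (by norm_num : (0:ℝ) ≤ 1/2) (by norm_num : (0:ℝ) ≤ 1/2) (by norm_num)
  have h2 := hcone 2 (by norm_num) _ h
  have : (2:ℝ) • ((1/2:ℝ) • a + (1/2:ℝ) • b) = a + b := by
    rw [smul_add, smul_smul, smul_smul]; norm_num
  rwa [this] at h2

lemma int_add_mem {Y : Type*} [AddCommGroup Y] [Module ℝ Y]
    [TopologicalSpace Y] [IsTopologicalAddGroup Y]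
    (K : Set Y) (hconv : Convex ℝ K)
    (hcone : ∀ t : ℝ, 0 < t → ∀ y ∈ K, t • y ∈ K)
    {a b : Y} (ha : a ∈ interior K) (hb : b ∈ K) : a + b ∈ interior K := by
  have hopen : IsOpen ((b + ·) '' interior K) :=
    (Homeomorph.addLeft b).isOpenMap _ isOpen_interior
  have hsub : ((b + ·) '' interior K) ⊆ K := by
    rintro _ ⟨a', ha', rfl⟩
    simpa [add_comm] using cone_add_mem K hconv hcone (interior_subset ha') hb
  have : a + b ∈ (b + ·) '' interior K := ⟨a, ha, add_comm b a⟩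
  exact interior_maximal hsub hopen this


/-- Key step in the necessary optimality condition: if `T ∈ ∂G(x̄)`,
`L ∈ ∂S(x̄)` and `x̄ ∈ Ω` is an `ε`-weak local minimal solution of `(P)` on the
neighborhood `U`, then the system `F(x) - F(x̄) - T(x - x̄) + ε ∈ -int K`,
`H(x) - H(x̄) - L(x - x̄) ∈ -int D` has no solution in `U ∩ C`. -/
theorem stmt_12
    {X Y Z : Type*}
    [AddCommGroup X] [Module ℝ X] [TopologicalSpace X] [IsTopologicalAddGroup X]
    [ContinuousSMul ℝ X]
    [AddCommGroup Y] [Module ℝ Y] [TopologicalSpace Y] [IsTopologicalAddGroup Y]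
    [ContinuousSMul ℝ Y]
    [AddCommGroup Z] [Module ℝ Z] [TopologicalSpace Z] [IsTopologicalAddGroup Z]
    [ContinuousSMul ℝ Z]
    (K : Set Y) (hKconv : Convex ℝ K)
    (hKcone : ∀ t : ℝ, 0 < t → ∀ y ∈ K, t • y ∈ K)
    (hKint : (interior K).Nonempty)
    (D : Set Z) (hDconv : Convex ℝ D)
    (hDcone : ∀ t : ℝ, 0 < t → ∀ z ∈ D, t • z ∈ D)
    (hDint : (interior D).Nonempty)
    (C : Set X) (hC : Convex ℝ C)
    (F G : X → Y) (H S : X → Z)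
    (Ω : Set X) (hΩ : Ω = {x ∈ C | H x - S x ∈ -D})
    (ε : Y) (hε : ε ∈ K) (xbar : X) (hxbar : xbar ∈ Ω)
    (T : X →L[ℝ] Y) (hT : ∀ x : X, G x - G xbar - T (x - xbar) ∈ K)
    (L : X →L[ℝ] Z) (hL : ∀ x : X, S x - S xbar - L (x - xbar) ∈ D)
    (U : Set X) (hU : U ∈ nhds xbar)
    (hmin : ∀ x ∈ U ∩ Ω, F x - G x - (F xbar - G xbar) + ε ∉ -interior K) :
    ¬ ∃ x ∈ U ∩ C,
        F x - F xbar - T (x - xbar) + ε ∈ -interior K ∧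
        H x - H xbar - L (x - xbar) ∈ -interior D := by
  rintro ⟨x, ⟨hxU, hxC⟩, h1, h2⟩
  rw [hΩ] at hxbar
  obtain ⟨hxbarC, hxbarD⟩ := hxbar
  rw [Set.mem_neg] at hxbarD h1 h2
  -- x ∈ Ω
  have hd1 : -(H x - H xbar - L (x - xbar)) ∈ interior D := h2
  have hd2 : S x - S xbar - L (x - xbar) ∈ D := hL x
  have hd3 : -(H xbar - S xbar) ∈ D := hxbarD
  have hsum : -(H x - H xbar - L (x - xbar)) + (S x - S xbar - L (x - xbar)) + -(H xbar - S xbar) = -(H x - S x) := by abel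
  have hxΩ : x ∈ Ω := by
    rw [hΩ]
    refine ⟨hxC, Set.mem_neg.mpr ?_⟩
    have := int_add_mem D hDconv hDcone (int_add_mem D hDconv hDcone hd1 hd2) hd3
    rw [hsum] at this
    exact interior_subset this
  have hk1 : -(F x - F xbar - T (x - xbar) + ε) ∈ interior K := h1
  have hk2 : G x - G xbar - T (x - xbar) ∈ K := hT x
  have hksum : -(F x - F xbar - T (x - xbar) + ε) + (G x - G xbar - T (x - xbar)) = -(F x - G x - (F xbar - G xbar) + ε) := by abel
  have := int_add_mem K hKconv hKcone hk1 hk2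
  rw [hksum] at this
  exact hmin x ⟨hxU, hxΩ⟩ (Set.mem_neg.mpr this)
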